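/- Let 0 < c < 1 and set z_c = log((1+c)/(1−c) + sqrt(((1+c)/(1−c))² − 1)). Define φ(z) = sinh(cz) − sinh(z) + (1+c)z. Then φ(0) = 0, φ is concave on [0,∞), φ'(0) = 2c > 0, and φ'(z_c) < 0; for c = 1/2 one has φ(z) > 0 for 0 < z ≤ z_{1/2} = log(3 + 2√2). -/

import Mathlib

set_option maxHeartbeats 2000000 in
theorem phi_properties (c : ℝ) (hc₀ : 0 < c) (hc₁ : c < 1)
    (zc : ℝ)
    (hzc : zc = Real.log ((1 + c) / (1 - c) + Real.sqrt (((1 + c) / (1 - c)) ^ 2 - 1)))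
    (φ : ℝ → ℝ)
    (hφ : ∀ z, φ z = Real.sinh (c * z) - Real.sinh z + (1 + c) * z) :
    φ 0 = 0 ∧
    ConcaveOn ℝ (Set.Ici 0) φ ∧
    deriv φ 0 = 2 * c ∧ 0 < 2 * c ∧
    deriv φ zc < 0 ∧
    (c = 1 / 2 → ∀ z : ℝ, 0 < z → z ≤ Real.log (3 + 2 * Real.sqrt 2) → 0 < φ z) := by
  have hφ' : φ = fun z => Real.sinh (c * z) - Real.sinh z + (1 + c) * z := funext hφ
  subst hφ'
  -- first derivative
  have hder : ∀ z : ℝ, HasDerivAt (fun z => Real.sinh (c * z) - Real.sinh z + (1 + c) * z)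
      (c * Real.cosh (c * z) - Real.cosh z + (1 + c)) z := by
    intro z
    have h1 : HasDerivAt (fun z : ℝ => Real.sinh (c * z)) (Real.cosh (c * z) * (c * 1)) z :=
      (Real.hasDerivAt_sinh (c * z)).comp z ((hasDerivAt_id z).const_mul c)
    have h2 := Real.hasDerivAt_sinh z
    have h3 : HasDerivAt (fun z : ℝ => (1 + c) * z) ((1 + c) * 1) z :=
      (hasDerivAt_id z).const_mul (1 + c)
    have := (h1.sub h2).add h3
    exact this.congr_deriv (by ring)
  have hderiv : deriv (fun z => Real.sinh (c * z) - Real.sinh z + (1 + c) * z)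
      = fun z => c * Real.cosh (c * z) - Real.cosh z + (1 + c) :=
    funext fun z => (hder z).deriv
  -- second derivative
  have hder2 : ∀ z : ℝ, HasDerivAt (fun z => c * Real.cosh (c * z) - Real.cosh z + (1 + c))
      (c ^ 2 * Real.sinh (c * z) - Real.sinh z) z := by
    intro z
    have h1 : HasDerivAt (fun z : ℝ => Real.cosh (c * z)) (Real.sinh (c * z) * (c * 1)) z :=
      (Real.hasDerivAt_cosh (c * z)).comp z ((hasDerivAt_id z).const_mul c)
    have h2 := Real.hasDerivAt_cosh z
    have := ((h1.const_mul c).sub h2).add_const (1 + c)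
    exact this.congr_deriv (by ring)
  -- part 1
  have h0 : (fun z => Real.sinh (c * z) - Real.sinh z + (1 + c) * z) 0 = 0 := by simp
  -- part 2 : concavity
  have hconc : ConcaveOn ℝ (Set.Ici 0) (fun z => Real.sinh (c * z) - Real.sinh z + (1 + c) * z) := by
    apply concaveOn_of_deriv2_nonpos (convex_Ici 0)
    · exact Continuous.continuousOn (by continuity)
    · intro x _; exact (hder x).differentiableAt.differentiableWithinAt
    · intro x _; rw [hderiv]; exact (hder2 x).differentiableAt.differentiableWithinAt
    · intro x hx
      rw [interior_Ici] at hx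
      have hx0 : (0:ℝ) < x := hx
      have e2 : deriv^[2] (fun z => Real.sinh (c * z) - Real.sinh z + (1 + c) * z) x
          = c ^ 2 * Real.sinh (c * x) - Real.sinh x := by
        show deriv (deriv _) x = _
        rw [hderiv]
        exact (hder2 x).deriv
      rw [e2]
      have h1 : Real.sinh (c * x) < Real.sinh x :=
        Real.sinh_lt_sinh.mpr (by nlinarith)
      have h2 : 0 < Real.sinh (c * x) := Real.sinh_pos_iff.mpr (by positivity)
      have hc2 : c ^ 2 ≤ 1 := by nlinarith
      nlinarith [mul_nonneg (sub_nonneg.mpr hc2) h2.le]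
  refine ⟨h0, hconc, ?_, by linarith, ?_, ?_⟩
  · rw [hderiv]; simp; ring
  · -- deriv at zc is negative
    set x := (1 + c) / (1 - c) with hx
    have h1c : (0:ℝ) < 1 - c := by linarith
    have hx1 : 1 < x := (one_lt_div h1c).mpr (by linarith)
    have hs0 : 0 ≤ Real.sqrt (x ^ 2 - 1) := Real.sqrt_nonneg _
    have hs2 : Real.sqrt (x ^ 2 - 1) ^ 2 = x ^ 2 - 1 := Real.sq_sqrt (by nlinarith)
    set s := Real.sqrt (x ^ 2 - 1) with hsdef
    have hy1 : 1 < x + s := by linarith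
    have hy0 : (0:ℝ) < x + s := by linarith
    have hinv : (x + s)⁻¹ = x - s := by
      refine inv_eq_of_mul_eq_one_right ?_
      linear_combination -hs2
    have hcosh : Real.cosh zc = x := by
      rw [hzc, Real.cosh_log hy0, hinv]; ring
    have hzc0 : 0 < zc := by
      rw [hzc]; exact Real.log_pos hy1
    rw [hderiv]
    have hcc : Real.cosh (c * zc) < Real.cosh zc := by
      rw [Real.cosh_lt_cosh, abs_of_pos (by positivity), abs_of_pos hzc0]
      nlinarith
    rw [hcosh] at hcc
    have hxx : (1 - c) * x = 1 + c := by
      rw [hx]; field_simp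
    have := mul_lt_mul_of_pos_left hcc hc₀
    show c * Real.cosh (c * zc) - Real.cosh zc + (1 + c) < 0
    rw [hcosh]
    nlinarith
  · -- c = 1/2 case
    intro h5 z hz0 hzL
    subst h5
    set s2 := Real.sqrt 2 with hs2def
    have hs2 : s2 ^ 2 = 2 := Real.sq_sqrt (by norm_num)
    have hs2pos : 0 < s2 := Real.sqrt_pos.mpr (by norm_num)
    have hs2lb : 1.414 < s2 := by nlinarith
    have hs2ub : s2 < 1.415 := by nlinarith
    set L := Real.log (3 + 2 * s2) with hLdef
    have h3pos : (0:ℝ) < 3 + 2 * s2 := by linarith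
    have hL0 : 0 < L := Real.log_pos (by linarith)
    -- sinh L = 2 * s2
    have hinv1 : (3 + 2 * s2)⁻¹ = 3 - 2 * s2 := by
      refine inv_eq_of_mul_eq_one_right ?_; linear_combination (-4:ℝ) * hs2
    have hsinhL : Real.sinh L = 2 * s2 := by
      rw [hLdef, Real.sinh_log h3pos, hinv1]; ring
    -- (1/2) * L = log (1 + s2)
    have h1s2 : (0:ℝ) < 1 + s2 := by linarith
    have hsq : (1 + s2) ^ 2 = 3 + 2 * s2 := by linear_combination hs2
    have hhalf : (1/2 : ℝ) * L = Real.log (1 + s2) := by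
      rw [hLdef, ← hsq, Real.log_pow]
      push_cast
      ring
    have hinv2 : (1 + s2)⁻¹ = s2 - 1 := by
      refine inv_eq_of_mul_eq_one_right ?_; linear_combination hs2
    have hsinhhalf : Real.sinh ((1/2 : ℝ) * L) = 1 := by
      rw [hhalf, Real.sinh_log h1s2, hinv2]; ring
    -- lower bound on L
    have hLlb : (5/4 : ℝ) ≤ L := by
      rw [hLdef, Real.le_log_iff_exp_le h3pos]
      have h4 : Real.exp (5/4) ^ 4 = Real.exp 5 := by
        rw [← Real.exp_nat_mul]; norm_num
      have h5' : Real.exp 5 = Real.exp 1 ^ 5 := by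
        rw [← Real.exp_nat_mul]; norm_num
      have he : Real.exp 1 < 2.7182818286 := Real.exp_one_lt_d9
      have hexp5 : Real.exp 5 < 149 := by
        rw [h5']
        calc Real.exp 1 ^ 5 < 2.7182818286 ^ 5 := by
              refine pow_lt_pow_left₀ he (Real.exp_pos 1).le (by norm_num)
          _ < 149 := by norm_num
      refine le_of_pow_le_pow_left₀ (n := 4) (by norm_num) h3pos.le ?_
      rw [h4]
      nlinarith
    -- φ L > 0
    have hφL : 0 < Real.sinh ((1/2 : ℝ) * L) - Real.sinh L + (1 + 1/2 : ℝ) * L := by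
      rw [hsinhL, hsinhhalf]
      linarith
    -- use concavity
    have hzL' : z ≤ L := hzL
    have hLne : L ≠ 0 := ne_of_gt hL0
    have hb0 : 0 < z / L := div_pos hz0 hL0
    have hb1 : z / L ≤ 1 := (div_le_one hL0).mpr hzL'
    have ha0 : 0 ≤ 1 - z / L := by linarith
    have hsum : (1 - z / L) + z / L = 1 := by ring
    have hmem0 : (0:ℝ) ∈ Set.Ici (0:ℝ) := Set.mem_Ici.mpr le_rfl
    have hmemL : L ∈ Set.Ici (0:ℝ) := Set.mem_Ici.mpr hL0.le
    have hkey := hconc.2 hmem0 hmemL ha0 hb0.le hsum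
    simp only [smul_eq_mul, mul_zero, Real.sinh_zero, zero_add] at hkey
    have hzz : (z / L) * L = z := div_mul_cancel₀ z hLne
    rw [hzz] at hkey
    have : 0 < (z / L) * (Real.sinh ((1/2 : ℝ) * L) - Real.sinh L + (1 + 1/2 : ℝ) * L) :=
      mul_pos hb0 hφL
    calc (0:ℝ) < (z / L) * (Real.sinh ((1/2:ℝ) * L) - Real.sinh L + (1 + 1/2 : ℝ) * L) := this
      _ ≤ Real.sinh (1/2 * z) - Real.sinh z + (1 + 1/2) * z := by
          linarith [hkey]
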